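/- Let m ≥ 1 and let c : ℕ^m → ℂ satisfy ∑_{j ∈ ℕ^m} |c(j)|² < ∞. Suppose c = ∑_{ℓ=1}^L a_1^{(ℓ)} ⊙ ⋯ ⊙ a_m^{(ℓ)} for some L < ∞ and some sequences a_i^{(ℓ)} : ℕ → ℂ. Then there exist L' < ∞ and sequences c_i^{(ℓ)} ∈ ℓ²(ℕ), 1 ≤ i ≤ m, 1 ≤ ℓ ≤ L', such that c = ∑_{ℓ=1}^{L'} c_1^{(ℓ)} ⊙ ⋯ ⊙ c_m^{(ℓ)}. -/

import Mathlib

open scoped BigOperators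

/-- The symmetric tensor product `a_1 ⊙ ⋯ ⊙ a_m` of `m` sequences, evaluated at
`j ∈ ℕ^m`: `(1/m!) ∑_σ a_{σ(1)}(j_1) ⋯ a_{σ(m)}(j_m)`. -/
noncomputable def symTensor (m : ℕ) (a : Fin m → ℕ+ → ℂ) (j : Fin m → ℕ+) : ℂ :=
  (m.factorial : ℂ)⁻¹ * ∑ σ : Equiv.Perm (Fin m), ∏ i, a (σ i) (j i)

private lemma memℓ2_iff_summable (f : ℕ+ → ℂ) :
    Memℓp f 2 ↔ Summable fun n => ‖f n‖ ^ 2 := by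
  rw [memℓp_gen_iff (by norm_num : (0:ℝ) < ((2 : ENNReal)).toReal)]
  have h2 : ((2 : ENNReal)).toReal = (2:ℝ) := by norm_num
  rw [h2]
  simp_rw [Real.rpow_two]

/-- Key lemma: an `ℓ²` function of finite elementary tensor rank has an elementary
tensor representation with `ℓ²` factors. -/
private lemma elem_rep (m : ℕ) (hm : 1 ≤ m) :
    ∀ (c : (Fin m → ℕ+) → ℂ), Summable (fun j => ‖c j‖ ^ 2) →
    ∀ (ι : Type) [Fintype ι], ∀ (a : ι → Fin m → ℕ+ → ℂ),
      (∀ j, c j = ∑ ℓ, ∏ i, a ℓ i (j i)) →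
      ∃ (κ : Type) (_ : Fintype κ) (b : κ → Fin m → ℕ+ → ℂ),
        (∀ t i, Summable fun n => ‖b t i n‖ ^ 2) ∧
        ∀ j, c j = ∑ t, ∏ i, b t i (j i) := by
  induction m, hm using Nat.le_induction with
  | base =>
    intro c hc2 ι _ a hrep
    refine ⟨Fin 1, inferInstance, fun _ _ n => c (fun _ => n), ?_, ?_⟩
    · intro t i
      have h := ((Equiv.funUnique (Fin 1) ℕ+).symm.summable_iff
        (f := fun j : Fin 1 → ℕ+ => ‖c j‖ ^ 2)).mpr hc2
      refine h.congr fun n => ?_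
      show ‖c ((Equiv.funUnique (Fin 1) ℕ+).symm n)‖ ^ 2 = ‖c fun _ => n‖ ^ 2
      rw [show ((Equiv.funUnique (Fin 1) ℕ+).symm n) = fun _ => n from
        funext fun x => @uniqueElim_const (Fin 1) ℕ+ inferInstance n x]
    · intro j
      have hj : j = fun _ => j 0 := funext fun i => by rw [Subsingleton.elim i 0]
      rw [Fin.sum_univ_one, Fin.prod_univ_one]
      conv_lhs => rw [hj]
  | succ m hm IH =>
    intro c hc2 ι _ a hrep
    classical
    have hm' : 0 < m := hm
    set i0 : Fin m := ⟨0, hm'⟩ with hi0def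
    -- slices are ℓ²
    have hconsinj : ∀ j' : Fin m → ℕ+,
        Function.Injective (fun n : ℕ+ => (Fin.cons n j' : Fin (m+1) → ℕ+)) := by
      intro j' n n' h
      simpa using congrFun h 0
    have hslmem : ∀ j' : Fin m → ℕ+, Memℓp (fun n => c (Fin.cons n j')) 2 := by
      intro j'
      rw [memℓ2_iff_summable]
      exact hc2.comp_injective (hconsinj j')
    set sl : (Fin m → ℕ+) → lp (fun _ : ℕ+ => ℂ) 2 :=
      fun j' => ⟨fun n => c (Fin.cons n j'), hslmem j'⟩ with hsldef
    -- coercion as a linear map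
    let T : (lp (fun _ : ℕ+ => ℂ) 2) →ₗ[ℂ] (ℕ+ → ℂ) :=
      { toFun := fun f => ⇑f
        map_add' := lp.coeFn_add
        map_smul' := fun r f => lp.coeFn_smul r f }
    have hTinj : Function.Injective T := fun f g h => Subtype.ext h
    let V : Submodule ℂ (ℕ+ → ℂ) := Submodule.span ℂ (Set.range fun ℓ => a ℓ 0)
    haveI : FiniteDimensional ℂ V := FiniteDimensional.span_of_finite ℂ (Set.finite_range _)
    let U : Submodule ℂ (lp (fun _ : ℕ+ => ℂ) 2) := Submodule.span ℂ (Set.range sl)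
    have hslU : ∀ j', sl j' ∈ U := fun j' => Submodule.subset_span ⟨j', rfl⟩
    -- slice decomposition as plain functions
    have hslfun : ∀ j' : Fin m → ℕ+,
        (T (sl j') : ℕ+ → ℂ) = ∑ ℓ, (∏ i : Fin m, a ℓ i.succ (j' i)) • a ℓ 0 := by
      intro j'
      funext n
      have h1 : (T (sl j')) n = c (Fin.cons n j') := rfl
      rw [h1, hrep (Fin.cons n j')]
      rw [Finset.sum_apply]
      refine Finset.sum_congr rfl fun ℓ _ => ?_
      rw [Fin.prod_univ_succ]
      simp [mul_comm]
    have hUmap : Submodule.map T U ≤ V := by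
      rw [Submodule.map_span]
      refine Submodule.span_le.mpr ?_
      rintro _ ⟨_, ⟨j', rfl⟩, rfl⟩
      rw [hslfun]
      exact Submodule.sum_mem _ fun ℓ _ =>
        Submodule.smul_mem _ _ (Submodule.subset_span ⟨ℓ, rfl⟩)
    haveI : FiniteDimensional ℂ (Submodule.map T U) := Submodule.finiteDimensional_of_le hUmap
    let eU : U ≃ₗ[ℂ] Submodule.map T U := Submodule.equivMapOfInjective T hTinj U
    haveI : FiniteDimensional ℂ U := LinearEquiv.finiteDimensional eU.symm
    let u := Module.finBasis ℂ U
    set r := Module.finrank ℂ U with hrdef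
    set g : Fin r → (Fin m → ℕ+) → ℂ := fun i j' => u.repr ⟨sl j', hslU j'⟩ i with hgdef
    -- decomposition of c
    have hdecomp : ∀ j : Fin (m+1) → ℕ+,
        c j = ∑ i, ((u i : lp (fun _ : ℕ+ => ℂ) 2) : ℕ+ → ℂ) (j 0) * g i (Fin.tail j) := by
      intro j
      have hx := congrArg (T.comp U.subtype) (u.sum_repr ⟨sl (Fin.tail j), hslU _⟩)
      rw [map_sum] at hx
      have hx2 := congrFun hx (j 0)
      simp only [map_smul, Finset.sum_apply, Pi.smul_apply, smul_eq_mul,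
        LinearMap.comp_apply, Submodule.coe_subtype] at hx2
      have h3 : (T (sl (Fin.tail j))) (j 0) = c j := by
        show c (Fin.cons (j 0) (Fin.tail j)) = c j
        rw [Fin.cons_self_tail]
      rw [h3] at hx2
      rw [← hx2]
      refine Finset.sum_congr rfl fun i _ => ?_
      rw [mul_comm]
      rfl
    -- norms of slices
    have hslnorm : ∀ j', ‖sl j'‖ ^ 2 = ∑' n : ℕ+, ‖c (Fin.cons n j')‖ ^ 2 := by
      intro j'
      have h := lp.norm_rpow_eq_tsum (p := 2) (by norm_num) (sl j')
      have h2 : ((2 : ENNReal)).toReal = (2:ℝ) := by norm_num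
      rw [h2] at h
      simp_rw [Real.rpow_two] at h
      exact h
    have hprod : Summable (fun p : (Fin m → ℕ+) × ℕ+ => ‖c (Fin.cons p.2 p.1)‖ ^ 2) := by
      have hinj : Function.Injective
          (fun p : (Fin m → ℕ+) × ℕ+ => (Fin.cons p.2 p.1 : Fin (m+1) → ℕ+)) := by
        intro p q h
        have h0 : p.2 = q.2 := by simpa using congrFun h 0
        have ht : p.1 = q.1 := by
          funext k
          simpa using congrFun h k.succ
        exact Prod.ext ht h0
      exact hc2.comp_injective hinj
    have hslsum : Summable (fun j' : Fin m → ℕ+ => ‖sl j'‖ ^ 2) := by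
      have h := (summable_prod_of_nonneg (fun p => by positivity)).mp hprod
      have h2 := h.2
      simp only at h2
      convert h2 using 1
      funext j'
      exact hslnorm j'
    -- summability of coordinates
    have hgsum : ∀ i, Summable (fun j' => ‖g i j'‖ ^ 2) := by
      intro i
      set φ := LinearMap.toContinuousLinearMap (u.coord i) with hφdef
      have hb : ∀ j', ‖g i j'‖ ^ 2 ≤ ‖φ‖ ^ 2 * ‖sl j'‖ ^ 2 := by
        intro j'
        have hle := φ.le_opNorm (⟨sl j', hslU j'⟩ : U)
        have hφx : φ (⟨sl j', hslU j'⟩ : U) = g i j' := by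
          rw [hφdef]
          rw [hgdef]
          simp [Module.Basis.coord_apply]
        have hnx : ‖(⟨sl j', hslU j'⟩ : U)‖ = ‖sl j'‖ := rfl
        rw [hφx, hnx] at hle
        calc ‖g i j'‖ ^ 2 ≤ (‖φ‖ * ‖sl j'‖) ^ 2 :=
              pow_le_pow_left₀ (norm_nonneg _) hle 2
          _ = ‖φ‖ ^ 2 * ‖sl j'‖ ^ 2 := mul_pow _ _ _
      exact Summable.of_nonneg_of_le (fun _ => by positivity) hb (hslsum.mul_left _)
    -- an extension of the coordinate functionals to all sequences
    obtain ⟨W, hW⟩ := Submodule.exists_isCompl (Submodule.map T U)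
    let π := (Submodule.map T U).projectionOnto W hW
    let ψ : Fin r → (ℕ+ → ℂ) →ₗ[ℂ] ℂ :=
      fun i => (u.coord i).comp ((eU.symm.toLinearMap).comp π)
    have hψ : ∀ i (y : U), ψ i (T (y : lp (fun _ : ℕ+ => ℂ) 2)) = u.repr y i := by
      intro i y
      have h1 : T (y : lp (fun _ : ℕ+ => ℂ) 2) = ((eU y : Submodule.map T U) : ℕ+ → ℂ) :=
        (Submodule.coe_equivMapOfInjective_apply T hTinj U y).symm
      show (u.coord i) (eU.symm (π (T (y : lp (fun _ : ℕ+ => ℂ) 2)))) = u.repr y i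
      rw [h1, Submodule.projectionOnto_apply_left hW (eU y), LinearEquiv.symm_apply_apply,
        Module.Basis.coord_apply]
    -- the coordinates have finite rank
    have hgrep : ∀ i j', g i j' = ∑ ℓ, ψ i (a ℓ 0) * ∏ k : Fin m, a ℓ k.succ (j' k) := by
      intro i j'
      have h1 : g i j' = ψ i (T (sl j')) := (hψ i ⟨sl j', hslU j'⟩).symm
      rw [h1, hslfun j', map_sum]
      refine Finset.sum_congr rfl fun ℓ _ => ?_
      rw [map_smul, smul_eq_mul, mul_comm]
    -- apply the induction hypothesis to every coordinate
    have hIH : ∀ i, ∃ (κ : Type) (_ : Fintype κ) (b : κ → Fin m → ℕ+ → ℂ),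
        (∀ t k, Summable fun n => ‖b t k n‖ ^ 2) ∧
        ∀ j', g i j' = ∑ t, ∏ k, b t k (j' k) := by
      intro i
      refine IH (g i) (hgsum i) ι
        (fun ℓ k => (if k = i0 then ψ i (a ℓ 0) else 1) • a ℓ k.succ) ?_
      intro j'
      rw [hgrep i j']
      refine Finset.sum_congr rfl fun ℓ _ => ?_
      simp only [Pi.smul_apply, smul_eq_mul]
      rw [Finset.prod_mul_distrib, Finset.prod_ite_eq' Finset.univ i0
        (fun _ => ψ i (a ℓ 0))]
      simp
    choose κ κfin b hbsum hbrep using hIH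
    letI : ∀ i, Fintype (κ i) := κfin
    refine ⟨(Σ i : Fin r, κ i), inferInstance,
      fun p => Fin.cons (((u p.1 : lp (fun _ : ℕ+ => ℂ) 2) : ℕ+ → ℂ)) (b p.1 p.2), ?_, ?_⟩
    · intro p i
      refine Fin.cases ?_ ?_ i
      · simp only [Fin.cons_zero]
        exact (memℓ2_iff_summable _).mp (lp.memℓp (u p.1 : lp (fun _ : ℕ+ => ℂ) 2))
      · intro k
        simp only [Fin.cons_succ]
        exact hbsum p.1 p.2 k
    · intro j
      rw [hdecomp j, ← Finset.univ_sigma_univ, Finset.sum_sigma]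
      refine Finset.sum_congr rfl fun i _ => ?_
      rw [hbrep i (Fin.tail j), Finset.mul_sum]
      refine Finset.sum_congr rfl fun t _ => ?_
      rw [Fin.prod_univ_succ]
      simp only [Fin.cons_zero, Fin.cons_succ]
      rfl

theorem stmt13 (m : ℕ) (hm : 1 ≤ m) (c : (Fin m → ℕ+) → ℂ)
    (hc2 : Summable fun j : Fin m → ℕ+ => ‖c j‖ ^ 2)
    (L : ℕ) (a : Fin L → Fin m → ℕ+ → ℂ)
    (hrep : ∀ j : Fin m → ℕ+, c j = ∑ ℓ, symTensor m (a ℓ) j) :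
    ∃ (L' : ℕ) (b : Fin L' → Fin m → ℕ+ → ℂ),
      (∀ ℓ i, Summable fun n : ℕ+ => ‖b ℓ i n‖ ^ 2) ∧
      ∀ j : Fin m → ℕ+, c j = ∑ ℓ, symTensor m (b ℓ) j := by
  classical
  have hm' : 0 < m := hm
  set i0 : Fin m := ⟨0, hm'⟩ with hi0def
  -- c has a finite elementary tensor representation
  have hrep' : ∀ j, c j = ∑ p : Fin L × Equiv.Perm (Fin m),
      ∏ i, ((if i = i0 then ((m.factorial : ℂ)⁻¹ : ℂ) else 1) • a p.1 (p.2 i)) (j i) := by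
    intro j
    rw [hrep, Fintype.sum_prod_type]
    refine Finset.sum_congr rfl fun ℓ _ => ?_
    unfold symTensor
    rw [Finset.mul_sum]
    refine Finset.sum_congr rfl fun σ _ => ?_
    simp only [Pi.smul_apply, smul_eq_mul]
    rw [Finset.prod_mul_distrib, Finset.prod_ite_eq' Finset.univ i0
      (fun _ => ((m.factorial : ℂ)⁻¹ : ℂ))]
    simp
  -- c is symmetric
  have hsymm : ∀ (σ : Equiv.Perm (Fin m)) (j : Fin m → ℕ+), c (j ∘ σ) = c j := by
    intro σ j
    rw [hrep, hrep]
    refine Finset.sum_congr rfl fun ℓ _ => ?_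
    unfold symTensor
    congr 1
    calc ∑ τ : Equiv.Perm (Fin m), ∏ i, a ℓ (τ i) ((j ∘ σ) i)
        = ∑ τ : Equiv.Perm (Fin m), ∏ i, a ℓ ((τ * σ⁻¹ : Equiv.Perm (Fin m)) i) (j i) := by
          refine Finset.sum_congr rfl fun τ _ => ?_
          rw [← Equiv.prod_comp σ (fun i => a ℓ ((τ * σ⁻¹ : Equiv.Perm (Fin m)) i) (j i))]
          simp [Equiv.Perm.mul_apply]
      _ = ∑ τ : Equiv.Perm (Fin m), ∏ i, a ℓ (τ i) (j i) :=
          Equiv.sum_comp (Equiv.mulRight σ⁻¹) (fun ρ => ∏ i, a ℓ (ρ i) (j i))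
  obtain ⟨κ, instκ, b, hbsum, hbrep⟩ :=
    elem_rep m hm c hc2 (Fin L × Equiv.Perm (Fin m))
      (fun p i => (if i = i0 then ((m.factorial : ℂ)⁻¹ : ℂ) else 1) • a p.1 (p.2 i)) hrep'
  letI := instκ
  refine ⟨Fintype.card κ, fun ℓ => b ((Fintype.equivFin κ).symm ℓ), ?_, ?_⟩
  · intro ℓ i
    have h := hbsum ((Fintype.equivFin κ).symm ℓ) i
    exact h
  · intro j
    have hcard : (Finset.univ : Finset (Equiv.Perm (Fin m))).card = m.factorial := by
      simp [Fintype.card_perm]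
    have hfac : (m.factorial : ℂ) ≠ 0 := Nat.cast_ne_zero.mpr (Nat.factorial_ne_zero m)
    have h1 : c j = (m.factorial : ℂ)⁻¹ * ∑ σ : Equiv.Perm (Fin m), c (j ∘ σ) := by
      rw [Finset.sum_congr rfl (fun σ _ => hsymm σ j), Finset.sum_const, hcard,
        nsmul_eq_mul, ← mul_assoc, inv_mul_cancel₀ hfac, one_mul]
    rw [h1]
    have h2 : ∀ σ : Equiv.Perm (Fin m), c (j ∘ σ) = ∑ t, ∏ i, b t (σ⁻¹ i) (j i) := by
      intro σ
      rw [hbrep (j ∘ σ)]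
      refine Finset.sum_congr rfl fun t _ => ?_
      rw [← Equiv.prod_comp σ (fun i => b t (σ⁻¹ i) (j i))]
      simp
    simp_rw [h2]
    rw [Finset.sum_comm, Finset.mul_sum]
    have h3 : ∀ t : κ, (m.factorial : ℂ)⁻¹ * ∑ σ : Equiv.Perm (Fin m),
        ∏ i, b t (σ⁻¹ i) (j i) = symTensor m (b t) j := by
      intro t
      unfold symTensor
      congr 1
      exact Equiv.sum_comp (Equiv.inv (Equiv.Perm (Fin m))) (fun σ => ∏ i, b t (σ i) (j i))
    simp_rw [h3]
    exact (Equiv.sum_comp (Fintype.equivFin κ).symm (fun t => symTensor m (b t) j)).symm
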